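/- For the FF bi-objective function f_1(x) = 1 − exp(−∑ᵢ(xᵢ − 1/√n)²), f_2(x) = 1 − exp(−∑ᵢ(xᵢ + 1/√n)²) on [−4,4]ⁿ, every point of the form x = (t/√n, ..., t/√n) with t ∈ [−1, 1] is Pareto optimal. -/

import Mathlib

/-- For the FF bi-objective function on [−4,4]ⁿ, every point (t/√n,...,t/√n)
with t ∈ [−1,1] is Pareto optimal. -/
theorem ff_segment_pareto (n : ℕ) (hn : 1 ≤ n)
    (S : Set (EuclideanSpace ℝ (Fin n)))
    (hS : S = {x | ∀ i, x i ∈ Set.Icc (-4 : ℝ) 4})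
    (f₁ f₂ : EuclideanSpace ℝ (Fin n) → ℝ)
    (hf₁ : ∀ x, f₁ x = 1 - Real.exp (-(∑ i, (x i - 1 / Real.sqrt n) ^ 2)))
    (hf₂ : ∀ x, f₂ x = 1 - Real.exp (-(∑ i, (x i + 1 / Real.sqrt n) ^ 2)))
    (t : ℝ) (ht : t ∈ Set.Icc (-1 : ℝ) 1)
    (x : EuclideanSpace ℝ (Fin n)) (hx : ∀ i, x i = t / Real.sqrt n) :
    x ∈ S ∧ ¬ ∃ y ∈ S, (f₁ y ≤ f₁ x ∧ f₂ y ≤ f₂ x) ∧ (f₁ y < f₁ x ∨ f₂ y < f₂ x) := by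
  have hn' : (0:ℝ) < n := by exact_mod_cast hn
  set s := Real.sqrt n with hsdef
  have hs : 0 < s := Real.sqrt_pos.2 hn'
  have hs2 : s ^ 2 = n := Real.sq_sqrt hn'.le
  have hs1 : (1:ℝ) ≤ s := by
    rw [show (1:ℝ) = Real.sqrt 1 by simp]
    exact Real.sqrt_le_sqrt (by exact_mod_cast hn)
  obtain ⟨ht1, ht2⟩ := ht
  -- sum computations at x
  have hsum1 : ∑ i : Fin n, (x i - 1/s)^2 = (t-1)^2 := by
    have he : ∀ i : Fin n, (x i - 1/s)^2 = (t-1)^2 / n := by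
      intro i
      rw [hx i, div_sub_div_same, div_pow, hs2]
    rw [Finset.sum_congr rfl (fun i _ => he i), Finset.sum_const, Finset.card_univ,
      Fintype.card_fin, nsmul_eq_mul]
    field_simp
  have hsum2 : ∑ i : Fin n, (x i + 1/s)^2 = (t+1)^2 := by
    have he : ∀ i : Fin n, (x i + 1/s)^2 = (t+1)^2 / n := by
      intro i
      rw [hx i, ← add_div, div_pow, hs2]
    rw [Finset.sum_congr rfl (fun i _ => he i), Finset.sum_const, Finset.card_univ,
      Fintype.card_fin, nsmul_eq_mul]
    field_simp
  have hxS : x ∈ S := by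
    rw [hS]
    intro i
    rw [hx i]
    have habs : |t / s| ≤ 1 := by
      rw [abs_div, abs_of_pos hs, div_le_one hs]
      exact le_trans (abs_le.2 ⟨ht1, ht2⟩) hs1
    have := abs_le.1 habs
    constructor
    · linarith [this.1]
    · linarith [this.2]
  refine ⟨hxS, ?_⟩
  rintro ⟨y, hyS, ⟨h1, h2⟩, hstrict⟩
  set A := ∑ i : Fin n, (y i - 1/s)^2 with hA
  set B := ∑ i : Fin n, (y i + 1/s)^2 with hB
  have hAnn : 0 ≤ A := Finset.sum_nonneg fun i _ => sq_nonneg _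
  have hBnn : 0 ≤ B := Finset.sum_nonneg fun i _ => sq_nonneg _
  have hA1 : A ≤ (t-1)^2 := by
    rw [hf₁, hf₁, hsum1] at h1
    have := Real.exp_le_exp.1 (by linarith : Real.exp (-(t-1)^2) ≤ Real.exp (-A))
    linarith
  have hB1 : B ≤ (t+1)^2 := by
    rw [hf₂, hf₂, hsum2] at h2
    have := Real.exp_le_exp.1 (by linarith : Real.exp (-(t+1)^2) ≤ Real.exp (-B))
    linarith
  -- the two reference points
  set p : EuclideanSpace ℝ (Fin n) := WithLp.toLp 2 (fun _ => 1/s) with hp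
  set q : EuclideanSpace ℝ (Fin n) := WithLp.toLp 2 (fun _ => -(1/s)) with hq
  have hdp : dist y p = Real.sqrt A := by
    rw [EuclideanSpace.dist_eq]
    congr 1
    refine Finset.sum_congr rfl fun i _ => ?_
    rw [Real.dist_eq, sq_abs]
  have hdq : dist y q = Real.sqrt B := by
    rw [EuclideanSpace.dist_eq]
    congr 1
    refine Finset.sum_congr rfl fun i _ => ?_
    simp only [Real.dist_eq, sq_abs, hq]
    ring
  have hdpq : dist p q = 2 := by
    rw [EuclideanSpace.dist_eq]
    have he : ∀ i : Fin n, dist (p i) (q i) ^ 2 = 4 / n := by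
      intro i
      simp only [Real.dist_eq, sq_abs, hp, hq]
      rw [show (1/s - -(1/s)) = 2/s by ring, div_pow, hs2]
      norm_num
    rw [Finset.sum_congr rfl (fun i _ => he i), Finset.sum_const, Finset.card_univ,
      Fintype.card_fin, nsmul_eq_mul]
    rw [show (n:ℝ) * (4 / n) = 4 by field_simp]
    rw [show (4:ℝ) = 2^2 by norm_num]
    exact Real.sqrt_sq (by norm_num)
  have htri : (2:ℝ) ≤ Real.sqrt A + Real.sqrt B := by
    have := dist_triangle p y q
    rw [hdpq, dist_comm p y, hdp, hdq] at this
    linarith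
  have hsqA : Real.sqrt A ≤ 1 - t := by
    have := Real.sqrt_le_sqrt hA1
    rwa [Real.sqrt_sq_eq_abs, abs_of_nonpos (by linarith), neg_sub] at this
  have hsqB : Real.sqrt B ≤ 1 + t := by
    have := Real.sqrt_le_sqrt hB1
    rwa [Real.sqrt_sq_eq_abs, abs_of_nonneg (by linarith), add_comm] at this
  rcases hstrict with h | h
  · have hAlt : A < (t-1)^2 := by
      rw [hf₁, hf₁, hsum1] at h
      have := Real.exp_lt_exp.1 (by linarith : Real.exp (-(t-1)^2) < Real.exp (-A))
      linarith
    have : Real.sqrt A < 1 - t := by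
      have h' := Real.sqrt_lt_sqrt hAnn hAlt
      rwa [Real.sqrt_sq_eq_abs, abs_of_nonpos (by linarith), neg_sub] at h'
    linarith
  · have hBlt : B < (t+1)^2 := by
      rw [hf₂, hf₂, hsum2] at h
      have := Real.exp_lt_exp.1 (by linarith : Real.exp (-(t+1)^2) < Real.exp (-B))
      linarith
    have : Real.sqrt B < 1 + t := by
      have h' := Real.sqrt_lt_sqrt hBnn hBlt
      rwa [Real.sqrt_sq_eq_abs, abs_of_nonneg (by linarith), add_comm] at h'
    linarith
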